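/- arXiv:2501.10897 — 2 statements merged into one kernel-verified Lean document; each statement's English description precedes it below -/
import Mathlib

section
/- Let A be an I × R real matrix and B a J × R real matrix. (a) If krank(A) = 0 or krank(B) = 0, then krank(A ⊙ B) = 0. (b) If krank(A) ≥ 1 and krank(B) ≥ 1, then krank(A ⊙ B) ≥ min(krank(A) + krank(B) − 1, R). -/
open Matrix MeasureTheory

namespace LBGM

/-- The set of latent variables connected to observed variable `j`. -/
def co {J K : ℕ} (G : Fin J → Fin K → Bool) (j : Fin J) : Finset (Fin K) :=
  Finset.univ.filter (fun k => G j k = true)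

/-- The set of latent variables connected to some observed variable in `S`. -/
def coS {J K : ℕ} (G : Fin J → Fin K → Bool) (S : Finset (Fin J)) : Finset (Fin K) :=
  S.biUnion (co G)

/-- `θ j` depends only on the latent coordinates in `co G j`. -/
def DependsOnlyOnCo {J K V H : ℕ} (G : Fin J → Fin K → Bool)
    (θ : Fin J → (Fin K → Fin H) → Fin V → ℝ) : Prop :=
  ∀ (j : Fin J) (a a' : Fin K → Fin H), (∀ k ∈ co G j, a k = a' k) → θ j a = θ j a'

/-- Every `θ j (· | a)` is a probability vector on `{0,…,V-1}`. -/
def IsCPT {J K V H : ℕ} (θ : Fin J → (Fin K → Fin H) → Fin V → ℝ) : Prop :=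
  ∀ j a, (∀ v, 0 ≤ θ j a v) ∧ (∑ v, θ j a v) = 1

/-- `ν` is a probability mass function on `{0,…,H-1}^K`. -/
def IsPMF {K H : ℕ} (ν : (Fin K → Fin H) → ℝ) : Prop :=
  (∀ a, 0 ≤ ν a) ∧ (∑ a, ν a) = 1

/-- Induced joint pmf of the observed vector `Y`. -/
noncomputable def jointP {J K V H : ℕ} (ν : (Fin K → Fin H) → ℝ)
    (θ : Fin J → (Fin K → Fin H) → Fin V → ℝ) (y : Fin J → Fin V) : ℝ :=
  ∑ a : Fin K → Fin H, ν a * ∏ j, θ j a (y j)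

/-- Extend a latent configuration on `S` to all of `[K]`, filling in `0` elsewhere. -/
def extendA {K H : ℕ} [NeZero H] (S : Finset (Fin K)) (a : {k // k ∈ S} → Fin H) :
    Fin K → Fin H :=
  fun k => if h : k ∈ S then a ⟨k, h⟩ else 0

/-- Conditional probability table `P(Y_M | A_S)`. -/
noncomputable def cpt {J K V H : ℕ} [NeZero H]
    (θ : Fin J → (Fin K → Fin H) → Fin V → ℝ)
    (M : Finset (Fin J)) (S : Finset (Fin K)) :
    Matrix ({j // j ∈ M} → Fin V) ({k // k ∈ S} → Fin H) ℝ :=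
  Matrix.of fun y a => ∏ j : {j // j ∈ M}, θ j.1 (extendA S a) (y j)

/-- Unfolded tensor `[T]_{S₁,S₂}`: the matrix of joint marginal probabilities of
`Y_{S₁}` and `Y_{S₂}`. -/
noncomputable def unfoldT {J K V H : ℕ} (ν : (Fin K → Fin H) → ℝ)
    (θ : Fin J → (Fin K → Fin H) → Fin V → ℝ) (S₁ S₂ : Finset (Fin J)) :
    Matrix ({j // j ∈ S₁} → Fin V) ({j // j ∈ S₂} → Fin V) ℝ :=
  Matrix.of fun r c => ∑ y : Fin J → Fin V,
    if (∀ j : {j // j ∈ S₁}, y j.1 = r j) ∧ (∀ j : {j // j ∈ S₂}, y j.1 = c j)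
      then jointP ν θ y else 0

/-- `[T]_{S,:} = [T]_{S, [J]∖S}`. -/
noncomputable def unfoldRow {J K V H : ℕ} (ν : (Fin K → Fin H) → ℝ)
    (θ : Fin J → (Fin K → Fin H) → Fin V → ℝ) (S : Finset (Fin J)) :
    Matrix ({j // j ∈ S} → Fin V) ({j // j ∈ Sᶜ} → Fin V) ℝ :=
  unfoldT ν θ S Sᶜ

/-- Marginal pmf of `Y_S`. -/
noncomputable def marginalP {J K V H : ℕ} (ν : (Fin K → Fin H) → ℝ)
    (θ : Fin J → (Fin K → Fin H) → Fin V → ℝ) (S : Finset (Fin J))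
    (r : {j // j ∈ S} → Fin V) : ℝ :=
  ∑ y : Fin J → Fin V, if ∀ j : {j // j ∈ S}, y j.1 = r j then jointP ν θ y else 0

/-- Assumption 1: single-parent CPTs have full column rank `H`. -/
def Assumption1 {J K V H : ℕ} [NeZero H] (G : Fin J → Fin K → Bool)
    (θ : Fin J → (Fin K → Fin H) → Fin V → ℝ) : Prop :=
  ∀ j : Fin J, (co G j).card = 1 → (cpt θ {j} (co G j)).rank = H

/-- Assumption 2: each connected latent variable makes a difference. -/
def Assumption2 {J K V H : ℕ} (G : Fin J → Fin K → Bool)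
    (θ : Fin J → (Fin K → Fin H) → Fin V → ℝ) : Prop :=
  ∀ j : Fin J, ∀ k ∈ co G j, ∃ a : Fin K → Fin H, ∃ h h' : Fin H,
    θ j (Function.update a k h) ≠ θ j (Function.update a k h')

/-- Pure-child graph condition: every observed variable has a parent and every
latent variable has at least two pure children. -/
def PureChild {J K : ℕ} (G : Fin J → Fin K → Bool) : Prop :=
  (∀ j, (co G j).Nonempty) ∧
    ∀ k : Fin K,
      2 ≤ (Finset.univ.filter (fun j => co G j = ({k} : Finset (Fin K)))).card

/-- Pairwise rank condition (paper's Lemma 3 conclusion, holding generically). -/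
def PairwiseRank {J K V H : ℕ} [NeZero H] (G : Fin J → Fin K → Bool)
    (θ : Fin J → (Fin K → Fin H) → Fin V → ℝ) : Prop :=
  ∀ j₁ j₂ : Fin J, j₁ ≠ j₂ → (¬ ∃ k : Fin K, co G j₁ ∪ co G j₂ = {k}) →
    H < (cpt θ ({j₁, j₂} : Finset (Fin J)) (co G j₁ ∪ co G j₂)).rank

/-- Khatri–Rao (column-wise Kronecker) product. -/
noncomputable def khatriRao {I J R : ℕ} (A : Matrix (Fin I) (Fin R) ℝ)
    (B : Matrix (Fin J) (Fin R) ℝ) : Matrix (Fin I × Fin J) (Fin R) ℝ :=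
  Matrix.of fun p r => A p.1 r * B p.2 r

/-- Kruskal rank: the largest `r` such that every `r` columns are linearly
independent. -/
noncomputable def krank {m : Type*} {R : ℕ} (A : Matrix m (Fin R) ℝ) : ℕ :=
  @Nat.findGreatest
    (fun r => ∀ s : Finset (Fin R), s.card = r →
      LinearIndependent ℝ (fun j : {x // x ∈ s} => (fun i => A i j.1)))
    (Classical.decPred _) R

/-- The joint probability table `P(A_S, A)`. -/
noncomputable def jointLatent {K H : ℕ} (ν : (Fin K → Fin H) → ℝ) (S : Finset (Fin K)) :
    Matrix ({k // k ∈ S} → Fin H) (Fin K → Fin H) ℝ :=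
  Matrix.of fun a b => if ∀ k : {k // k ∈ S}, b k.1 = a k then ν b else 0

/-- A family of `m` pairwise disjoint subsets of observed variables witnessing the
rank certificate of Proposition 1. -/
def GoodFamily {J K V H : ℕ} [NeZero H] (ν : (Fin K → Fin H) → ℝ)
    (θ : Fin J → (Fin K → Fin H) → Fin V → ℝ) (m : ℕ) : Prop :=
  ∃ S : Fin m → Finset (Fin J),
    (∀ l l', l ≠ l' → Disjoint (S l) (S l')) ∧
    (∀ l, 2 ≤ (S l).card) ∧
    (∀ l, ∀ j₁ ∈ S l, ∀ j₂ ∈ S l, j₁ ≠ j₂ →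
      (unfoldRow ν θ ({j₁, j₂} : Finset (Fin J))).rank ≤ H) ∧
    (∀ l l', l ≠ l' → ∀ j₁ ∈ S l, ∀ j₂ ∈ S l',
      H < (unfoldRow ν θ ({j₁, j₂} : Finset (Fin J))).rank)

/-- Index type for the free parameters of the pair `(θ_{j₁}, θ_{j₂})`:
for each `j ∈ {j₁,j₂}`, each latent configuration on `co G j`, and each
`v ∈ {0,…,V-2}` one real parameter (the `v = V-1` entry is determined by
normalization). -/
abbrev ParamIx (V H : ℕ) {J K : ℕ} (G : Fin J → Fin K → Bool) (j₁ j₂ : Fin J) : Type :=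
  Σ j : {j // j ∈ ({j₁, j₂} : Finset (Fin J))},
    (({k // k ∈ co G j.1} → Fin H) × Fin (V - 1))

/-- The conditional probability tables determined by a parameter point
`x : ℝ^D`. -/
noncomputable def thetaOf {J K : ℕ} (V H : ℕ) [NeZero H] [NeZero V]
    (G : Fin J → Fin K → Bool) (j₁ j₂ : Fin J)
    (x : ParamIx V H G j₁ j₂ → ℝ) :
    Fin J → (Fin K → Fin H) → Fin V → ℝ :=
  fun j a v =>
    if hj : j ∈ ({j₁, j₂} : Finset (Fin J)) then
      if hv : v.1 < V - 1 then
        x ⟨⟨j, hj⟩, (fun k => a k.1, ⟨v.1, hv⟩)⟩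
      else 1 - ∑ v' : Fin (V - 1), x ⟨⟨j, hj⟩, (fun k => a k.1, v')⟩
    else if v = 0 then 1 else 0

section KrankHelpers

/-- The predicate underlying `krank`. -/
private def colLI {m : Type*} {R : ℕ} (A : Matrix m (Fin R) ℝ) (r : ℕ) : Prop :=
  ∀ s : Finset (Fin R), s.card = r →
    LinearIndependent ℝ (fun j : {x // x ∈ s} => (fun i => A i j.1))

private lemma krank_eq_findGreatest {m : Type*} {R : ℕ} (A : Matrix m (Fin R) ℝ) :
    krank A = @Nat.findGreatest (colLI A) (Classical.decPred _) R := rfl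

private lemma colLI_zero {m : Type*} {R : ℕ} (A : Matrix m (Fin R) ℝ) : colLI A 0 := by
  intro s hs
  have hempty : IsEmpty {x // x ∈ s} := by
    rw [Finset.card_eq_zero] at hs
    subst hs
    exact ⟨fun x => absurd x.2 (Finset.notMem_empty x.1)⟩
  exact linearIndependent_empty_type

private lemma colLI_subset {m : Type*} {R : ℕ} (A : Matrix m (Fin R) ℝ)
    {s t : Finset (Fin R)} (hst : s ⊆ t)
    (h : LinearIndependent ℝ (fun j : {x // x ∈ t} => (fun i => A i j.1))) :
    LinearIndependent ℝ (fun j : {x // x ∈ s} => (fun i => A i j.1)) := by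
  have hinj : Function.Injective
      (fun j : {x // x ∈ s} => (⟨j.1, hst j.2⟩ : {x // x ∈ t})) :=
    by
      intro a b hab
      have h1 := congrArg Subtype.val hab
      exact Subtype.ext h1
  exact h.comp _ hinj

private lemma colLI_mono {m : Type*} {R : ℕ} (A : Matrix m (Fin R) ℝ) {r n : ℕ}
    (hr : r ≤ R) (hn : n ≤ r) (h : colLI A r) : colLI A n := by
  intro s hs
  obtain ⟨u, hsu, hu_univ, hu⟩ :=
    Finset.exists_subsuperset_card_eq (n := r) (Finset.subset_univ s)
      (by omega) (by simpa using hr)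
  exact colLI_subset A hsu (h u hu)

private lemma krank_le_R {m : Type*} {R : ℕ} (A : Matrix m (Fin R) ℝ) : krank A ≤ R := by
  rw [krank_eq_findGreatest]
  exact @Nat.findGreatest_le (colLI A) (Classical.decPred _) R

private lemma colLI_krank {m : Type*} {R : ℕ} (A : Matrix m (Fin R) ℝ) :
    colLI A (krank A) := by
  letI : DecidablePred (colLI A) := Classical.decPred _
  rw [krank_eq_findGreatest]
  exact Nat.findGreatest_spec (Nat.zero_le R) (colLI_zero A)

private lemma le_krank {m : Type*} {R : ℕ} (A : Matrix m (Fin R) ℝ) {n : ℕ}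
    (hn : n ≤ R) (h : colLI A n) : n ≤ krank A := by
  letI : DecidablePred (colLI A) := Classical.decPred _
  rw [krank_eq_findGreatest]
  exact Nat.le_findGreatest hn h

private lemma krank_eq_zero_iff {m : Type*} {R : ℕ} (A : Matrix m (Fin R) ℝ) :
    krank A = 0 ↔ ∀ n, 0 < n → n ≤ R → ¬ colLI A n := by
  letI : DecidablePred (colLI A) := Classical.decPred _
  rw [krank_eq_findGreatest, Nat.findGreatest_eq_zero_iff]

/-- A matrix whose columns include a linearly independent family indexed by `ι`
has rank at least `card ι`. -/
private lemma card_le_rank {m' κ ι : Type*} [Fintype m'] [Fintype κ] [Fintype ι]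
    (M : Matrix m' κ ℝ) (e : ι → κ)
    (h : LinearIndependent ℝ (fun k => (fun i => M i (e k)))) :
    Fintype.card ι ≤ M.rank := by
  rw [Matrix.rank_eq_finrank_span_cols]
  have hfin : FiniteDimensional ℝ (Submodule.span ℝ (Set.range Mᵀ)) :=
    FiniteDimensional.span_of_finite ℝ (Set.finite_range _)
  have hle : Submodule.span ℝ (Set.range fun k => (fun i => M i (e k))) ≤
      Submodule.span ℝ (Set.range Mᵀ) := by
    apply Submodule.span_mono
    rintro _ ⟨k, rfl⟩
    exact ⟨e k, rfl⟩
  calc Fintype.card ι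
      = Module.finrank ℝ (Submodule.span ℝ (Set.range fun k => (fun i => M i (e k)))) :=
        (finrank_span_eq_card h).symm
    _ ≤ _ := Submodule.finrank_mono hle

private lemma rank_add_rank_le_of_mul_eq_zero {ι : Type*} [Fintype ι] {I J : ℕ}
    (X : Matrix (Fin I) ι ℝ) (Y : Matrix ι (Fin J) ℝ) (h : X * Y = 0) :
    X.rank + Y.rank ≤ Fintype.card ι := by
  have hcomp : X.mulVecLin.comp Y.mulVecLin = 0 := by
    rw [← Matrix.mulVecLin_mul, h, Matrix.mulVecLin_zero]
  have hle : LinearMap.range Y.mulVecLin ≤ LinearMap.ker X.mulVecLin := by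
    rintro _ ⟨y, rfl⟩
    exact LinearMap.congr_fun hcomp y
  have h1 : Y.rank ≤ Module.finrank ℝ (LinearMap.ker X.mulVecLin) :=
    Submodule.finrank_mono hle
  have h2 : X.rank + Module.finrank ℝ (LinearMap.ker X.mulVecLin) = Fintype.card ι := by
    have h3 := LinearMap.finrank_range_add_finrank_ker X.mulVecLin
    rwa [Module.finrank_pi] at h3
  omega

end KrankHelpers

private lemma exists_zero_col {m : Type*} {R : ℕ} (A : Matrix m (Fin R) ℝ)
    (hR : 1 ≤ R) (h : krank A = 0) : ∃ r0 : Fin R, ∀ i, A i r0 = 0 := by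
  have h1 : ¬ colLI A 1 := (krank_eq_zero_iff A).mp h 1 one_pos hR
  rw [colLI] at h1
  push_neg at h1
  obtain ⟨s, hs, hdep⟩ := h1
  obtain ⟨r0, rfl⟩ := Finset.card_eq_one.mp hs
  refine ⟨r0, ?_⟩
  by_contra hne
  push_neg at hne
  obtain ⟨i0, hi0⟩ := hne
  apply hdep
  letI : Unique {x // x ∈ ({r0} : Finset (Fin R))} :=
    ⟨⟨⟨r0, Finset.mem_singleton_self r0⟩⟩,
      fun x => Subtype.ext (Finset.mem_singleton.mp x.2)⟩
  apply linearIndependent_unique_iff.mpr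
  intro hz
  have h2 : A i0 r0 = 0 := congrFun hz i0
  exact hi0 h2

/-- Lemma 4; Stegeman–Sidiropoulos: Kruskal-rank bounds for the
Khatri–Rao product. -/
theorem krank_khatriRao
    {I J R : ℕ} (A : Matrix (Fin I) (Fin R) ℝ) (B : Matrix (Fin J) (Fin R) ℝ) :
    ((krank A = 0 ∨ krank B = 0) → krank (khatriRao A B) = 0) ∧
    (1 ≤ krank A → 1 ≤ krank B →
      min (krank A + krank B - 1) R ≤ krank (khatriRao A B)) := by
  classical
  constructor
  · intro h
    rw [krank_eq_zero_iff]
    intro n hn hnR hP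
    have hR : 1 ≤ R := le_trans hn hnR
    have h1 : colLI (khatriRao A B) 1 := colLI_mono _ hnR hn hP
    obtain ⟨r0, hcol⟩ : ∃ r0 : Fin R, (∀ i, A i r0 = 0) ∨ (∀ j, B j r0 = 0) := by
      rcases h with h | h
      · obtain ⟨r0, h0⟩ := exists_zero_col A hR h
        exact ⟨r0, Or.inl h0⟩
      · obtain ⟨r0, h0⟩ := exists_zero_col B hR h
        exact ⟨r0, Or.inr h0⟩
    have hli := h1 {r0} (Finset.card_singleton r0)
    have hnz := hli.ne_zero ⟨r0, Finset.mem_singleton_self r0⟩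
    apply hnz
    funext p
    show khatriRao A B p r0 = 0
    rcases hcol with h0 | h0
    · simp [khatriRao, h0 p.1]
    · simp [khatriRao, h0 p.2]
  · intro hA hB
    apply le_krank _ (min_le_right _ _)
    intro s hs
    rw [Fintype.linearIndependent_iff]
    intro g hg
    by_contra hcon
    push_neg at hcon
    obtain ⟨x0, hx0⟩ := hcon
    exfalso
    set c : Fin R → ℝ := fun r => if h : r ∈ s then g ⟨r, h⟩ else 0 with hc
    set W : Finset (Fin R) := s.filter (fun r => c r ≠ 0) with hW
    have hcs : ∀ x : {x // x ∈ s}, c x.1 = g x := by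
      intro x
      rw [hc]
      exact dif_pos x.2
    have hx0W : x0.1 ∈ W := by
      rw [hW, Finset.mem_filter]
      exact ⟨x0.2, by rw [hcs x0]; exact hx0⟩
    have key : ∀ i j, ∑ r ∈ W, c r * (A i r * B j r) = 0 := by
      intro i j
      have h0 : ∑ x : {x // x ∈ s}, g x * (A i x.1 * B j x.1) = 0 := by
        have h0' := congrFun hg (i, j)
        simpa [khatriRao, Finset.sum_apply] using h0'
      have h1 : ∑ r ∈ s, c r * (A i r * B j r) = 0 := by
        rw [← Finset.sum_coe_sort s (fun r => c r * (A i r * B j r))]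
        rw [← h0]
        exact Finset.sum_congr rfl fun x _ => by rw [hcs x]
      rw [hW, Finset.sum_filter_of_ne]
      · exact h1
      · intro x _ hfx hcx
        exact hfx (by rw [hcx, zero_mul])
    set A' : Matrix (Fin I) {r // r ∈ W} ℝ := Matrix.of fun i r => c r.1 * A i r.1
      with hA'
    set B' : Matrix {r // r ∈ W} (Fin J) ℝ := Matrix.of fun r j => B j r.1 with hB'
    have hmul : A' * B' = 0 := by
      ext i j
      rw [Matrix.mul_apply]
      have hsum := Finset.sum_coe_sort W (fun r => c r * (A i r * B j r))
      calc ∑ r : {r // r ∈ W}, A' i r * B' r j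
          = ∑ r : {r // r ∈ W}, c r.1 * (A i r.1 * B j r.1) := by
            exact Finset.sum_congr rfl fun r _ => by
              rw [hA', hB']; simp [mul_assoc]
        _ = ∑ r ∈ W, c r * (A i r * B j r) := hsum
        _ = 0 := key i j
    have hrank_sum : A'.rank + B'.rank ≤ Fintype.card {r // r ∈ W} :=
      rank_add_rank_le_of_mul_eq_zero A' B' hmul
    rw [Fintype.card_coe] at hrank_sum
    have hWs : W ⊆ s := Finset.filter_subset _ _
    have hcW : ∀ r ∈ W, c r ≠ 0 := fun r hr => (Finset.mem_filter.mp hr).2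
    have hAW : min (krank A) W.card ≤ A'.rank := by
      obtain ⟨t, htW, ht⟩ := Finset.exists_subset_card_eq (s := W) (n := min (krank A) W.card)
        (min_le_right _ _)
      have hli : LinearIndependent ℝ (fun j : {x // x ∈ t} => (fun i => A i j.1)) :=
        colLI_mono A (krank_le_R A) (min_le_left _ _) (colLI_krank A) t ht
      have hne : ∀ x : {x // x ∈ t}, c x.1 ≠ 0 := fun x => hcW x.1 (htW x.2)
      have hli2 := hli.units_smul (fun x => Units.mk0 (c x.1) (hne x))
      have hli3 : LinearIndependent ℝ
          (fun x : {x // x ∈ t} => (fun i => A' i ⟨x.1, htW x.2⟩)) := by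
        have heq : (fun x : {x // x ∈ t} => (fun i => A' i ⟨x.1, htW x.2⟩)) =
            ((fun x : {x // x ∈ t} => Units.mk0 (c x.1) (hne x)) •
              fun j : {x // x ∈ t} => (fun i => A i j.1)) := by
          funext x
          funext i
          simp [hA', Units.smul_def]
        rw [heq]
        exact hli2
      have hcard := card_le_rank A'
        (fun x : {x // x ∈ t} => (⟨x.1, htW x.2⟩ : {r // r ∈ W})) hli3
      rwa [Fintype.card_coe, ht] at hcard
    have hBW : min (krank B) W.card ≤ B'.rank := by
      obtain ⟨t, htW, ht⟩ := Finset.exists_subset_card_eq (s := W) (n := min (krank B) W.card)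
        (min_le_right _ _)
      have hli : LinearIndependent ℝ (fun j : {x // x ∈ t} => (fun i => B i j.1)) :=
        colLI_mono B (krank_le_R B) (min_le_left _ _) (colLI_krank B) t ht
      have hli3 : LinearIndependent ℝ
          (fun x : {x // x ∈ t} => (fun j => B'ᵀ j ⟨x.1, htW x.2⟩)) := hli
      have hcard := card_le_rank B'ᵀ
        (fun x : {x // x ∈ t} => (⟨x.1, htW x.2⟩ : {r // r ∈ W})) hli3
      rwa [Fintype.card_coe, ht, Matrix.rank_transpose] at hcard
    have hw1 : 1 ≤ W.card := Finset.card_pos.mpr ⟨x0.1, hx0W⟩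
    have hws : W.card ≤ min (krank A + krank B - 1) R := by
      rw [← hs]
      exact Finset.card_le_card hWs
    omega

end LBGM
end

section
/- In the discrete latent bipartite graphical model, let M ⊆ [J] and suppose there exist a subset S ⊆ M with |S| = K and an enumeration S = {s_1,…,s_K} such that, for each k ∈ [K], co(s_k) = {k} and the V × H matrix P(Y_{s_k} | A_k) (with entries θ_{s_k}(v|h)) has full column rank H. Then the V^{|M|} × H^K conditional probability table P(Y_M | A_{[K]}) has full column rank H^K. -/
open Matrix MeasureTheory

namespace LBGM

private lemma exists_left_inverse_aux {m n : Type*} [Fintype m] [Fintype n] [DecidableEq m]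
    [DecidableEq n] (B : Matrix m n ℝ) (h : B.rank = Fintype.card n) :
    ∃ C : Matrix n m ℝ, C * B = 1 := by
  have hker : LinearMap.ker B.mulVecLin = ⊥ := by
    have h1 := LinearMap.finrank_range_add_finrank_ker B.mulVecLin
    rw [Module.finrank_fintype_fun_eq_card,
      show Module.finrank ℝ ↥(LinearMap.range B.mulVecLin) = B.rank from rfl, h] at h1
    exact Submodule.finrank_eq_zero.mp (by omega)
  obtain ⟨g, hg⟩ := LinearMap.exists_leftInverse_of_injective B.mulVecLin hker
  refine ⟨LinearMap.toMatrix' g, ?_⟩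
  calc LinearMap.toMatrix' g * B
      = LinearMap.toMatrix' g * LinearMap.toMatrix' (Matrix.toLin' B) := by
        rw [LinearMap.toMatrix'_toLin']
    _ = LinearMap.toMatrix' (g ∘ₗ Matrix.toLin' B) := (LinearMap.toMatrix'_comp _ _).symm
    _ = LinearMap.toMatrix' LinearMap.id := by rw [show Matrix.toLin' B = B.mulVecLin from rfl, hg]
    _ = 1 := LinearMap.toMatrix'_id


/-- if `M` contains a system of pure children of all `K` latent
variables whose CPTs have full column rank `H`, then `P(Y_M | A_{[K]})` has
full column rank `H^K`. -/
theorem cpt_full_column_rank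
    {J K V H : ℕ} [NeZero H] (hH : 2 ≤ H) (hVH : H ≤ V)
    (G : Fin J → Fin K → Bool)
    (θ : Fin J → (Fin K → Fin H) → Fin V → ℝ)
    (hdep : DependsOnlyOnCo G θ) (hcpt : IsCPT θ)
    (M : Finset (Fin J)) (s : Fin K → Fin J)
    (hinj : Function.Injective s) (hmem : ∀ k, s k ∈ M)
    (hco : ∀ k, co G (s k) = {k})
    (hrk : ∀ k, (cpt θ {s k} (co G (s k))).rank = H) :
    (cpt θ M (Finset.univ : Finset (Fin K))).rank = H ^ K := by
  classical
  set ι : Fin K → {j // j ∈ M} := fun k => ⟨s k, hmem k⟩ with hι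
  have hιinj : Function.Injective ι := fun k k' h => hinj (congrArg Subtype.val h)
  have hmemco : ∀ k : Fin K, k ∈ co G (s k) := fun k => by
    rw [hco k]; exact Finset.mem_singleton_self k
  have hcoeq : ∀ k : Fin K, ∀ k' ∈ co G (s k), k' = k := fun k k' h => by
    rw [hco k, Finset.mem_singleton] at h; exact h
  -- left inverses of the single-child CPTs
  have hleft : ∀ k : Fin K,
      ∃ C : Matrix ({k' // k' ∈ co G (s k)} → Fin H)
        ({j // j ∈ ({s k} : Finset (Fin J))} → Fin V) ℝ,
        C * cpt θ {s k} (co G (s k)) = 1 := by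
    intro k
    apply exists_left_inverse_aux
    have hc : Fintype.card ({k' // k' ∈ co G (s k)} → Fin H) = H := by
      rw [Fintype.card_fun, Fintype.card_coe, hco k, Finset.card_singleton,
        Fintype.card_fin, pow_one]
    rw [hc, hrk k]
  choose C hC using hleft
  set P := cpt θ M (Finset.univ : Finset (Fin K)) with hP
  set L : Matrix ({k // k ∈ (Finset.univ : Finset (Fin K))} → Fin H) ({j // j ∈ M} → Fin V) ℝ :=
    Matrix.of (fun a y => ∏ k : Fin K,
      C k (fun _ => a ⟨k, Finset.mem_univ k⟩) (fun _ => y (ι k))) with hL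
  have key : L * P = 1 := by
    ext a a'
    rw [Matrix.mul_apply]
    set g : {j // j ∈ M} → Fin V → ℝ := fun j v =>
      (∏ k ∈ Finset.univ.filter (fun k => ι k = j),
        C k (fun _ => a ⟨k, Finset.mem_univ k⟩) (fun _ => v)) *
      θ j.1 (extendA Finset.univ a') v with hg
    have stepA : ∀ y : {j // j ∈ M} → Fin V, L a y * P y a' = ∏ j, g j (y j) := by
      intro y
      have h1 : L a y = ∏ j : {j // j ∈ M}, ∏ k ∈ Finset.univ.filter (fun k => ι k = j),
          C k (fun _ => a ⟨k, Finset.mem_univ k⟩) (fun _ => y (ι k)) :=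
        (Finset.prod_fiberwise Finset.univ ι _).symm
      have h2 : ∀ j : {j // j ∈ M}, ∏ k ∈ Finset.univ.filter (fun k => ι k = j),
          C k (fun _ => a ⟨k, Finset.mem_univ k⟩) (fun _ => y (ι k))
          = ∏ k ∈ Finset.univ.filter (fun k => ι k = j),
          C k (fun _ => a ⟨k, Finset.mem_univ k⟩) (fun _ => y j) := by
        intro j
        refine Finset.prod_congr rfl (fun k hk => ?_)
        rw [(Finset.mem_filter.mp hk).2]
      have h3 : P y a' = ∏ j : {j // j ∈ M}, θ j.1 (extendA Finset.univ a') (y j) := rfl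
      rw [h1, h3, ← Finset.prod_mul_distrib]
      exact Finset.prod_congr rfl (fun j _ => by rw [h2 j])
    have stepB : ∀ j : {j // j ∈ M}, ∑ v, g j v =
        ∏ k ∈ Finset.univ.filter (fun k => ι k = j),
          (if a ⟨k, Finset.mem_univ k⟩ = a' ⟨k, Finset.mem_univ k⟩ then (1:ℝ) else 0) := by
      intro j
      by_cases hj : ∃ k, ι k = j
      · obtain ⟨k, hk⟩ := hj
        have hfib : Finset.univ.filter (fun k' => ι k' = j) = {k} := by
          ext k'
          simp only [Finset.mem_filter, Finset.mem_univ, true_and, Finset.mem_singleton, ← hk]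
          exact ⟨fun h => hιinj h, fun h => by rw [h]⟩
        rw [hfib]
        rw [Finset.prod_singleton]
        -- now compute the sum
        have hsub : ∀ x y : {k' // k' ∈ co G (s k)}, x = y := fun x y =>
          Subtype.ext (by rw [hcoeq k _ x.2, hcoeq k _ y.2])
        have hsubj : ∀ x y : {j' // j' ∈ ({s k} : Finset (Fin J))}, x = y := fun x y =>
          Subtype.ext (by
            rw [Finset.mem_singleton.mp x.2, Finset.mem_singleton.mp y.2])
        set f0 : {k' // k' ∈ co G (s k)} → Fin H := fun _ => a ⟨k, Finset.mem_univ k⟩ with hf0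
        set g0 : {k' // k' ∈ co G (s k)} → Fin H := fun _ => a' ⟨k, Finset.mem_univ k⟩ with hg0
        have hθeq : ∀ v, θ j.1 (extendA Finset.univ a') v
            = θ (s k) (extendA (co G (s k)) g0) v := by
          intro v
          have : j.1 = s k := by rw [← hk]
          rw [this]
          refine congrFun (hdep (s k) _ _ (fun k' hk' => ?_)) v
          have hk'k : k' = k := hcoeq k k' hk'
          subst hk'k
          simp only [extendA, dif_pos (Finset.mem_univ k'), dif_pos hk']
          rfl
        have hBentry : ∀ w : {j' // j' ∈ ({s k} : Finset (Fin J))} → Fin V,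
            cpt θ {s k} (co G (s k)) w g0
            = θ (s k) (extendA (co G (s k)) g0) (w ⟨s k, Finset.mem_singleton_self _⟩) := by
          intro w
          show (∏ j' : {j' // j' ∈ ({s k} : Finset (Fin J))},
            θ j'.1 (extendA (co G (s k)) g0) (w j')) = _
          rw [Finset.prod_eq_single_of_mem ⟨s k, Finset.mem_singleton_self _⟩
            (Finset.mem_univ _) (fun b _ hb => absurd (hsubj b _) hb)]
        have hbij : Function.Bijective
            (fun v : Fin V => (fun _ => v : {j' // j' ∈ ({s k} : Finset (Fin J))} → Fin V)) := by
          constructor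
          · intro v v' h
            exact congrFun h ⟨s k, Finset.mem_singleton_self _⟩
          · intro w
            refine ⟨w ⟨s k, Finset.mem_singleton_self _⟩, funext (fun x => ?_)⟩
            rw [hsubj x ⟨s k, Finset.mem_singleton_self _⟩]
        have hsum : (∑ v, g j v) = (C k * cpt θ {s k} (co G (s k))) f0 g0 := by
          rw [Matrix.mul_apply]
          refine Fintype.sum_bijective _ hbij _ _ (fun v => ?_)
          simp only [hg]
          rw [hfib, Finset.prod_singleton, hθeq v, hBentry]
        rw [hsum, hC k, Matrix.one_apply]
        congr 1
        simp only [eq_iff_iff]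
        constructor
        · intro h
          exact congrFun h ⟨k, hmemco k⟩
        · intro h
          funext x
          show a ⟨k, Finset.mem_univ k⟩ = a' ⟨k, Finset.mem_univ k⟩
          exact h
      · have hfib : Finset.univ.filter (fun k' => ι k' = j) = ∅ := by
          ext k'
          simp only [Finset.mem_filter, Finset.mem_univ, true_and, Finset.notMem_empty,
            iff_false]
          exact fun h => hj ⟨k', h⟩
        rw [hfib, Finset.prod_empty]
        have : ∀ v, g j v = θ j.1 (extendA Finset.univ a') v := by
          intro v
          rw [hg]
          simp only [hfib, Finset.prod_empty, one_mul]
        rw [Finset.sum_congr rfl (fun v _ => this v)]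
        exact (hcpt j.1 (extendA Finset.univ a')).2
    calc (∑ y : {j // j ∈ M} → Fin V, L a y * P y a')
        = ∑ y : {j // j ∈ M} → Fin V, ∏ j, g j (y j) :=
          Finset.sum_congr rfl (fun y _ => stepA y)
      _ = ∏ j : {j // j ∈ M}, ∑ v, g j v := (Fintype.prod_sum (fun j v => g j v)).symm
      _ = ∏ j : {j // j ∈ M}, ∏ k ∈ Finset.univ.filter (fun k => ι k = j),
            (if a ⟨k, Finset.mem_univ k⟩ = a' ⟨k, Finset.mem_univ k⟩ then (1:ℝ) else 0) :=
          Finset.prod_congr rfl (fun j _ => stepB j)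
      _ = ∏ k : Fin K,
            (if a ⟨k, Finset.mem_univ k⟩ = a' ⟨k, Finset.mem_univ k⟩ then (1:ℝ) else 0) :=
          Finset.prod_fiberwise Finset.univ ι _
      _ = (1 : Matrix _ _ ℝ) a a' := by
          rw [Fintype.prod_boole, Matrix.one_apply]
          congr 1
          simp only [eq_iff_iff]
          constructor
          · intro h
            funext x
            have hx : x = ⟨x.1, Finset.mem_univ x.1⟩ := Subtype.ext rfl
            rw [hx]; exact h x.1
          · intro h; rw [h]; exact fun _ => rfl
  -- conclude rank computation
  have hcard : Fintype.card ({k // k ∈ (Finset.univ : Finset (Fin K))} → Fin H) = H ^ K := by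
    rw [Fintype.card_fun, Fintype.card_coe, Finset.card_univ, Fintype.card_fin, Fintype.card_fin]
  refine le_antisymm ?_ ?_
  · calc P.rank ≤ Fintype.card ({k // k ∈ (Finset.univ : Finset (Fin K))} → Fin H) :=
        P.rank_le_card_width
      _ = H ^ K := hcard
  · calc (H : ℕ) ^ K
        = (1 : Matrix ({k // k ∈ (Finset.univ : Finset (Fin K))} → Fin H) _ ℝ).rank := by
          rw [Matrix.rank_one, hcard]
      _ = (L * P).rank := by rw [key]
      _ ≤ P.rank := Matrix.rank_mul_le_right L P


end LBGM
end
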